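/- Let S be a Dedekind domain, R a subring of S that is Noetherian and one-dimensional, and I a radical ideal of S with I ∩ R ≠ {0}. For each prime ideal Q of S containing I, set f_Q = dim_{R/(Q∩R)}(S/Q). Then I is an R-conductor ideal of S if and only if for every prime ideal M of S containing I, either f_M ≥ 2 or (I :_R M) ⊆ I. -/

import Mathlib

open Function

/-- A ring hom, as a linear map for the module structure it induces. -/
def ringHomLin {K S : Type*} [CommRing K] [CommRing S] (f : K →+* S) :
    letI := f.toModule; K →ₗ[K] S :=
  letI := f.toModule
  { toFun := f
    map_add' := f.map_add
    map_smul' := fun c x => by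
      show f (c * x) = f c * f x
      exact f.map_mul c x }

lemma aux_rank_le_one {K S : Type*} [CommRing K] [Nontrivial K] [CommRing S]
    (f : K →+* S) (hf : Surjective f) :
    @Module.rank K S _ _ f.toModule ≤ 1 := by
  letI := f.toModule
  have h := LinearMap.lift_rank_le_of_surjective (ringHomLin f) hf
  rw [Module.rank_self, Cardinal.lift_one, Cardinal.lift_le_one_iff] at h
  exact h

lemma aux_surj {K S : Type*} [CommRing K] [Nontrivial K] [CommRing S] [Nontrivial S]
    (f : K →+* S) (hK : ∀ a : K, a ≠ 0 → IsUnit a)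
    (h : ¬ 2 ≤ @Module.rank K S _ _ f.toModule) : Surjective f := by
  letI := f.toModule
  have hsm : ∀ (c : K) (y : S), c • y = f c * y := fun _ _ => rfl
  by_contra hns
  rw [Surjective] at hns
  push_neg at hns
  obtain ⟨t, ht⟩ := hns
  have hinj : Injective f := by
    intro a b hab
    by_contra hne
    have h1 : IsUnit (a - b) := hK _ (sub_ne_zero.mpr hne)
    have h2 : f (a - b) = 0 := by rw [map_sub, hab, sub_self]
    exact (h1.map f).ne_zero h2
  have hli : LinearIndependent K ![(1 : S), t] := by
    rw [LinearIndependent.pair_iff]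
    intro a b hab
    by_cases hb : b = 0
    · subst hb
      constructor
      · have : f a = 0 := by simpa [hsm] using hab
        exact hinj (by simpa using this)
      · rfl
    · exfalso
      obtain ⟨u, hu⟩ := hK b hb
      apply ht (u.inv * (-a))
      have h1 : b • t = -(a • (1 : S)) := by
        rw [eq_neg_iff_add_eq_zero, add_comm]; exact hab
      have h2 : t = (u.inv * (-a)) • (1 : S) := by
        calc t = ((u.inv * b) • t) := by rw [← hu]; simp [Units.inv_mul]
        _ = u.inv • (b • t) := by rw [mul_smul]
        _ = u.inv • (-(a • (1:S))) := by rw [h1]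
        _ = (u.inv * (-a)) • (1 : S) := by rw [mul_smul, neg_smul, smul_neg]
      rw [h2, hsm, mul_one]
  have h2 := hli.cardinal_lift_le_rank
  rw [Cardinal.mk_fin, Cardinal.lift_uzero, Cardinal.lift_natCast] at h2
  apply h
  exact_mod_cast h2

lemma aux_isMaximal_of_dim_one {R : Type*} [CommRing R] [IsDomain R]
    (hdim : ringKrullDim R = 1) {P : Ideal R} (hP : P.IsPrime) (hP0 : P ≠ ⊥) :
    P.IsMaximal := by
  by_contra hnot
  obtain ⟨Q, hQmax, hPQ⟩ := Ideal.exists_le_maximal P hP.ne_top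
  have hne : P ≠ Q := fun e => hnot (e ▸ hQmax)
  let p0 : PrimeSpectrum R := ⟨⊥, Ideal.bot_prime⟩
  let p1 : PrimeSpectrum R := ⟨P, hP⟩
  let p2 : PrimeSpectrum R := ⟨Q, hQmax.isPrime⟩
  have h01 : p0 < p1 := by
    rw [← PrimeSpectrum.asIdeal_lt_asIdeal]
    exact lt_of_le_of_ne bot_le (Ne.symm hP0)
  have h12 : p1 < p2 := by
    rw [← PrimeSpectrum.asIdeal_lt_asIdeal]
    exact lt_of_le_of_ne hPQ hne
  have hc : List.IsChain (· < ·) [p0, p1, p2] :=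
    List.isChain_cons_cons.mpr ⟨h01, List.isChain_cons_cons.mpr ⟨h12, List.isChain_singleton _⟩⟩
  have hlen := Order.LTSeries.length_le_krullDim
    (RelSeries.fromListIsChain [p0, p1, p2] (by simp) hc)
  rw [show (RelSeries.fromListIsChain [p0, p1, p2] (by simp) hc).length = 2 from rfl] at hlen
  rw [show Order.krullDim (PrimeSpectrum R) = ringKrullDim R from rfl, hdim] at hlen
  norm_num at hlen

/-- The conductor `(A :_S S) = {x ∈ S | x * S ⊆ A}` of an additive subgroup `A` of `S`,
as an ideal of `S`. -/
def condIdeal {S : Type*} [CommRing S] (A : AddSubgroup S) : Ideal S where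
  carrier := {x : S | ∀ s : S, x * s ∈ A}
  add_mem' := by
    intro x y hx hy s
    simpa [add_mul] using A.add_mem (hx s) (hy s)
  zero_mem' := by
    intro s
    simpa using A.zero_mem
  smul_mem' := by
    intro c x hx s
    have := hx (c * s)
    simpa [smul_eq_mul, mul_assoc, mul_comm, mul_left_comm] using this

/-- `R + I = {r + a | r ∈ R, a ∈ I}` as an additive subgroup of `S`. -/
def addSub {S : Type*} [CommRing S] (R : Subring S) (I : Ideal S) : AddSubgroup S where
  carrier := {x : S | ∃ r ∈ R, ∃ a ∈ I, x = r + a}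
  zero_mem' := ⟨0, R.zero_mem, 0, I.zero_mem, by simp⟩
  add_mem' := by
    rintro x y ⟨r, hr, a, ha, rfl⟩ ⟨r', hr', a', ha', rfl⟩
    exact ⟨r + r', R.add_mem hr hr', a + a', I.add_mem ha ha', by ring⟩
  neg_mem' := by
    rintro x ⟨r, hr, a, ha, rfl⟩
    exact ⟨-r, R.neg_mem hr, -a, I.neg_mem ha, by ring⟩

/-- `I` is an `R`-conductor ideal of `S` if `I = (V :_S S)` for some intermediate ring
`R ⊆ V ⊆ S`. -/
def IsConductorIdeal {S : Type*} [CommRing S] (R : Subring S) (I : Ideal S) : Prop :=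
  ∃ V : Subring S, R ≤ V ∧ I = condIdeal V.toAddSubgroup

/-- The subring `R + I` of `S`. -/
def rPlusI {S : Type*} [CommRing S] (R : Subring S) (I : Ideal S) : Subring S where
  carrier := {x : S | ∃ r ∈ R, ∃ a ∈ I, x = r + a}
  zero_mem' := ⟨0, R.zero_mem, 0, I.zero_mem, by simp⟩
  one_mem' := ⟨1, R.one_mem, 0, I.zero_mem, by simp⟩
  add_mem' := by
    rintro x y ⟨r, hr, a, ha, rfl⟩ ⟨r', hr', a', ha', rfl⟩
    exact ⟨r + r', R.add_mem hr hr', a + a', I.add_mem ha ha', by ring⟩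
  neg_mem' := by
    rintro x ⟨r, hr, a, ha, rfl⟩
    exact ⟨-r, R.neg_mem hr, -a, I.neg_mem ha, by ring⟩
  mul_mem' := by
    rintro x y ⟨r, hr, a, ha, rfl⟩ ⟨r', hr', a', ha', rfl⟩
    refine ⟨r * r', R.mul_mem hr hr', r * a' + a * r' + a * a', ?_, by ring⟩
    exact I.add_mem (I.add_mem (I.mul_mem_left _ ha') (I.mul_mem_right _ ha))
      (I.mul_mem_right _ ha)

lemma I_le_cond_rPlusI {S : Type*} [CommRing S] (R : Subring S) (I : Ideal S) :
    I ≤ condIdeal (rPlusI R I).toAddSubgroup := by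
  intro x hx s
  exact ⟨0, R.zero_mem, x * s, I.mul_mem_right _ hx, by ring⟩

theorem stmt_19 {S : Type*} [CommRing S] [IsDomain S] [IsDedekindDomain S]
    (R : Subring S) [IsNoetherianRing ↥R] (hdim : ringKrullDim ↥R = 1)
    (I : Ideal S) (hrad : I.radical = I) (hI : I.comap R.subtype ≠ ⊥) :
    IsConductorIdeal R I ↔
      ∀ M : Ideal S, M.IsPrime → I ≤ M →
        (2 ≤ @Module.rank (↥R ⧸ M.comap R.subtype) (S ⧸ M) _ _
            (Ideal.quotientMap M R.subtype le_rfl).toModule ∨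
        {x : S | x ∈ R ∧ ∀ m ∈ M, x * m ∈ I} ⊆ (I : Set S)) := by
  classical
  have hIbot : I ≠ ⊥ := by
    rintro rfl
    apply hI
    ext x
    simp only [Ideal.mem_comap, Ideal.mem_bot]
    exact ⟨fun h => Subtype.ext h, fun h => by simp [h]⟩
  constructor
  · rintro ⟨V, hRV, hIV⟩ M hMp hIM
    haveI := hMp
    by_cases h2 : 2 ≤ @Module.rank (↥R ⧸ M.comap R.subtype) (S ⧸ M) _ _
        (Ideal.quotientMap M R.subtype le_rfl).toModule
    · exact Or.inl h2
    right
    set P := M.comap R.subtype with hPdef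
    haveI hPprime : P.IsPrime := Ideal.IsPrime.comap _
    have hPne : P ≠ ⊥ := by
      intro h
      exact hI (le_bot_iff.mp (h ▸ Ideal.comap_mono hIM))
    have hPmax : P.IsMaximal := aux_isMaximal_of_dim_one hdim hPprime hPne
    haveI : Nontrivial (↥R ⧸ P) := Ideal.Quotient.nontrivial_iff.mpr hPmax.ne_top
    have hKfield : ∀ a : ↥R ⧸ P, a ≠ 0 → IsUnit a := by
      intro a ha
      obtain ⟨b, hb⟩ := ((Ideal.Quotient.maximal_ideal_iff_isField_quotient P).mp
        hPmax).mul_inv_cancel ha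
      exact IsUnit.of_mul_eq_one b hb
    have hsurj : Surjective (Ideal.quotientMap M R.subtype le_rfl) :=
      aux_surj _ hKfield h2
    -- I ⊆ V
    have hIsubV : ∀ y ∈ I, y ∈ V := by
      intro y hy
      have := (hIV ▸ hy : y ∈ condIdeal V.toAddSubgroup) 1
      simpa using this
    rintro x ⟨hxR, hxM⟩
    show x ∈ I
    rw [hIV]
    intro s
    obtain ⟨rb, hrb⟩ := hsurj (Ideal.Quotient.mk M s)
    obtain ⟨r, rfl⟩ := Ideal.Quotient.mk_surjective rb
    rw [Ideal.quotientMap_mk] at hrb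
    have hsr : s - (r : S) ∈ M := by
      have := Ideal.Quotient.eq.mp hrb
      simpa using (M.neg_mem this)
    have hxsr : x * (s - (r : S)) ∈ I := hxM _ hsr
    have hxr : x * (r : S) ∈ V := hRV (R.mul_mem hxR r.2)
    have hxs : x * s = x * (r : S) + x * (s - (r : S)) := by ring
    rw [hxs]
    exact V.add_mem hxr (hIsubV _ hxsr)
  · intro hC
    refine ⟨rPlusI R I, fun r hr => ⟨r, hr, 0, I.zero_mem, by simp⟩, ?_⟩
    set J := condIdeal (rPlusI R I).toAddSubgroup with hJdef
    refine le_antisymm (I_le_cond_rPlusI R I) ?_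
    by_contra hno
    obtain ⟨x0, hx0J, hx0I⟩ := SetLike.not_le_iff_exists.mp hno
    set T : Set (Ideal S) := {P | I ≤ P ∧ P.IsPrime} with hTdef
    have hIsInf : I = sInf T := by
      conv_lhs => rw [← hrad]
      exact Ideal.radical_eq_sInf I
    have hx0' : x0 ∉ sInf T := fun h => hx0I (hIsInf ▸ h)
    have hexM : ∃ M ∈ T, x0 ∉ M := by
      by_contra hall
      push_neg at hall
      exact hx0' (Ideal.mem_sInf.mpr fun {P} hP => hall P hP)
    obtain ⟨M, hMT, hx0M⟩ := hexM
    obtain ⟨hIM, hMp⟩ := hMT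
    haveI := hMp
    -- every member of T is maximal
    have hmaxT : ∀ P ∈ T, Ideal.IsMaximal P := by
      rintro P ⟨hIP, hPp⟩
      exact hPp.isMaximal (fun h => hIbot (le_bot_iff.mp (h ▸ hIP)))
    -- T is finite
    have hTfin : T.Finite := by
      apply Set.Finite.subset
        (Set.Finite.image IsDedekindDomain.HeightOneSpectrum.asIdeal
          (Ideal.finite_factors hIbot))
      rintro P ⟨hIP, hPp⟩
      refine ⟨⟨P, hPp, fun h => hIbot (le_bot_iff.mp (h ▸ hIP))⟩, ?_, rfl⟩
      exact Ideal.dvd_iff_le.mpr hIP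
    set Tf := hTfin.toFinset with hTfdef
    have hMTf : M ∈ Tf := hTfin.mem_toFinset.mpr ⟨hIM, hMp⟩
    set K : Ideal S := (Tf.erase M).inf id with hKdef
    -- I ≤ K
    have hIK : I ≤ K := by
      refine Finset.le_inf fun P hP => ?_
      exact (hTfin.mem_toFinset.mp (Finset.mem_of_mem_erase hP)).1
    -- J ⊓ K ≰ M
    have hJKM : ¬ (J ⊓ K ≤ M) := by
      intro hle
      have hmul : J * K ≤ M := le_trans Ideal.mul_le_inf hle
      rcases hMp.mul_le.mp hmul with hJM | hKM
      · exact hx0M (hJM hx0J)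
      · obtain ⟨P, hPmem, hPM⟩ := (Ideal.IsPrime.inf_le' hMp).mp hKM
        have hPT := hTfin.mem_toFinset.mp (Finset.mem_of_mem_erase hPmem)
        have : P = M := (hmaxT P hPT).eq_of_le hMp.ne_top hPM
        exact (Finset.ne_of_mem_erase hPmem) this
    obtain ⟨y, hyJK, hyM⟩ := SetLike.not_le_iff_exists.mp hJKM
    have hyJ : y ∈ J := hyJK.1
    have hyK : y ∈ K := hyJK.2
    -- decompose y = r + a with r ∈ R, a ∈ I
    obtain ⟨r, hrR, a, haI, hya⟩ : ∃ r ∈ R, ∃ a ∈ I, y = r + a := by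
      have := hyJ 1
      simp at this; exact this
    have hrM : r ∉ M := fun h => hyM (hya ▸ M.add_mem h (hIM haI))
    have hrJ : r ∈ J := by
      have : r = y - a := by rw [hya]; ring
      rw [this]
      exact J.sub_mem hyJ (I_le_cond_rPlusI R I haI)
    have hrK : r ∈ K := by
      have : r = y - a := by rw [hya]; ring
      rw [this]
      exact K.sub_mem hyK (hIK haI)
    -- K ⊓ M ≤ I, hence r * m ∈ I for m ∈ M
    have hrmI : ∀ m ∈ M, r * m ∈ I := by
      intro m hm
      rw [hIsInf]
      refine Ideal.mem_sInf.mpr ?_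
      rintro P hPT
      by_cases hPM : P = M
      · exact hPM ▸ M.mul_mem_left r hm
      · have hPTf : P ∈ Tf.erase M := Finset.mem_erase.mpr ⟨hPM, hTfin.mem_toFinset.mpr hPT⟩
        have : K ≤ P := Finset.inf_le hPTf
        exact P.mul_mem_right m (this hrK)
    rcases hC M hMp hIM with h2 | hcol
    · -- rank ≤ 1 contradiction, using surjectivity from r
      have hMmax : M.IsMaximal := hmaxT M ⟨hIM, hMp⟩
      have hSfield : IsField (S ⧸ M) :=
        (Ideal.Quotient.maximal_ideal_iff_isField_quotient M).mp hMmax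
      have hPneTop : M.comap R.subtype ≠ ⊤ := by
        intro h
        have : (1 : ↥R) ∈ M.comap R.subtype := h ▸ Submodule.mem_top
        exact hMp.ne_top (Ideal.eq_top_of_isUnit_mem M this isUnit_one)
      haveI : Nontrivial (↥R ⧸ M.comap R.subtype) := Ideal.Quotient.nontrivial_iff.mpr hPneTop
      have hsurj : Surjective (Ideal.quotientMap M R.subtype le_rfl) := by
        intro z
        obtain ⟨s, rfl⟩ := Ideal.Quotient.mk_surjective z
        have hrne : Ideal.Quotient.mk M r ≠ 0 := by
          rw [Ne, Ideal.Quotient.eq_zero_iff_mem]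
          exact hrM
        obtain ⟨u, hu⟩ := hSfield.mul_inv_cancel hrne
        obtain ⟨s', rfl⟩ := Ideal.Quotient.mk_surjective u
        -- r * (s' * s) ∈ rPlusI R I
        obtain ⟨r1, hr1R, a1, ha1I, heq⟩ : ∃ r1 ∈ R, ∃ a1 ∈ I, r * (s' * s) = r1 + a1 := by
          have := hrJ (s' * s)
          simp at this; exact this
        refine ⟨Ideal.Quotient.mk _ ⟨r1, hr1R⟩, ?_⟩
        rw [Ideal.quotientMap_mk]
        have h1 : Ideal.Quotient.mk M (r1 : S) = Ideal.Quotient.mk M (r * (s' * s)) := by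
          rw [heq]
          have : Ideal.Quotient.mk M a1 = 0 := Ideal.Quotient.eq_zero_iff_mem.mpr (hIM ha1I)
          rw [map_add, this, add_zero]
        show Ideal.Quotient.mk M r1 = Ideal.Quotient.mk M s
        rw [h1, map_mul, map_mul, ← mul_assoc, hu, one_mul]
      have hle1 := aux_rank_le_one (Ideal.quotientMap M R.subtype le_rfl) hsurj
      have : (2 : Cardinal) ≤ 1 := le_trans h2 hle1
      norm_num at this
    · exact hrM (hIM (hcol ⟨hrR, hrmI⟩))
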